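/- Let f ∈ ℂ[[λ,μ]] be symmetric (f(λ,μ) = f(μ,λ)), set f̃ = 1 + λμ·f, and let F = Even(f̃) and O = Odd(f) denote the even and odd parts. Then f̃ satisfies (λ+μ)·f̃(λ,μ) = λ·e^{μ}·f̃(μ,−λ−μ) + μ·e^{−λ}·f̃(λ,−λ−μ) if and only if both of the following hold in ℂ[[λ,μ]]: (i) (λ+μ)·F(λ,μ) = λ·e^{μ}·F(μ,−λ−μ) + μ·e^{−λ}·F(λ,−λ−μ), and (ii) O(λ,μ) + e^{μ}·O(μ,−λ−μ) + e^{−λ}·O(λ,−λ−μ) = 0. -/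

import Mathlib

noncomputable section

open Finset MvPowerSeries

/-- Total degree of a monomial in two variables. -/
def deg (d : Fin 2 →₀ ℕ) : ℕ := d 0 + d 1

/-- Formal substitution `f(p, q)` of two polynomials `p`, `q` with zero constant term
for the variables of a two-variable formal power series `f`: the coefficient of a
monomial `d` in `f(p,q)` is `∑_{i,j} (coeff of λ^i μ^j in f) ⬝ (coeff of d in pⁱ·qʲ)`,
a finite sum since `coeff d (pⁱ·qʲ) = 0` whenever `i + j > deg d`. -/
def sub2 (p q : MvPolynomial (Fin 2) ℂ) (f : MvPowerSeries (Fin 2) ℂ) :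
    MvPowerSeries (Fin 2) ℂ :=
  fun d => ∑ ij ∈ Finset.range (deg d + 1) ×ˢ Finset.range (deg d + 1),
    MvPowerSeries.coeff (Finsupp.single 0 ij.1 + Finsupp.single 1 ij.2) f *
      MvPolynomial.coeff d (p ^ ij.1 * q ^ ij.2)

/-- The formal exponential `exp g = ∑ₖ gᵏ/k!` of a two-variable formal power series `g`
with zero constant term. -/
def expMv (g : MvPowerSeries (Fin 2) ℂ) : MvPowerSeries (Fin 2) ℂ :=
  fun d => ∑ k ∈ Finset.range (deg d + 1), MvPowerSeries.coeff d (g ^ k) / (k.factorial : ℂ)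

/-- `f(μ, −λ−μ)`. -/
def s₁ (f : MvPowerSeries (Fin 2) ℂ) : MvPowerSeries (Fin 2) ℂ :=
  sub2 (MvPolynomial.X 1) (-MvPolynomial.X 0 - MvPolynomial.X 1) f

/-- `f(λ, −λ−μ)`. -/
def s₂ (f : MvPowerSeries (Fin 2) ℂ) : MvPowerSeries (Fin 2) ℂ :=
  sub2 (MvPolynomial.X 0) (-MvPolynomial.X 0 - MvPolynomial.X 1) f

/-- `f(μ, λ)`. -/
def swapS (f : MvPowerSeries (Fin 2) ℂ) : MvPowerSeries (Fin 2) ℂ :=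
  sub2 (MvPolynomial.X 1) (MvPolynomial.X 0) f

/-- `f(−λ, −μ)`. -/
def negS (f : MvPowerSeries (Fin 2) ℂ) : MvPowerSeries (Fin 2) ℂ :=
  sub2 (-MvPolynomial.X 0) (-MvPolynomial.X 1) f

/-- Equation (1.5b), the compressed hexagon equation:
`λμ(λ+μ)·( f(λ,μ) + e^{μ}·f(μ,−λ−μ) + e^{−λ}·f(λ,−λ−μ) ) = λ(e^{μ} − 1) + μ(e^{−λ} − 1)`. -/
def Eq15b (f : MvPowerSeries (Fin 2) ℂ) : Prop :=
  (X 0 : MvPowerSeries (Fin 2) ℂ) * X 1 * (X 0 + X 1) *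
      (f + expMv (X 1) * s₁ f + expMv (-X 0) * s₂ f)
    = X 0 * (expMv (X 1) - 1) + X 1 * (expMv (-X 0) - 1)

/-- Even part `(f(λ,μ) + f(−λ,−μ))/2`. -/
def evenPart (f : MvPowerSeries (Fin 2) ℂ) : MvPowerSeries (Fin 2) ℂ :=
  (1 / 2 : ℂ) • (f + negS f)

/-- Odd part `(f(λ,μ) − f(−λ,−μ))/2`. -/
def oddPart (f : MvPowerSeries (Fin 2) ℂ) : MvPowerSeries (Fin 2) ℂ :=
  (1 / 2 : ℂ) • (f - negS f)

namespace Aux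

abbrev Ser := MvPowerSeries (Fin 2) ℂ
abbrev Pol := MvPolynomial (Fin 2) ℂ

/-- the monomial exponent (i, j) -/
def sng (i j : ℕ) : Fin 2 →₀ ℕ := Finsupp.single 0 i + Finsupp.single 1 j

@[simp] lemma sng_apply0 (i j : ℕ) : sng i j 0 = i := by
  simp [sng, Finsupp.single_apply]

@[simp] lemma sng_apply1 (i j : ℕ) : sng i j 1 = j := by
  simp [sng, Finsupp.single_apply]

lemma eq_sng (d : Fin 2 →₀ ℕ) : d = sng (d 0) (d 1) := by
  ext i
  fin_cases i <;> simp

lemma sng_inj {i j k l : ℕ} : sng i j = sng k l ↔ i = k ∧ j = l := by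
  constructor
  · intro h
    constructor
    · have := congrArg (fun d : Fin 2 →₀ ℕ => d 0) h; simpa using this
    · have := congrArg (fun d : Fin 2 →₀ ℕ => d 1) h; simpa using this
  · rintro ⟨rfl, rfl⟩; rfl

@[simp] lemma deg_sng (i j : ℕ) : deg (sng i j) = i + j := by simp [deg]

lemma sng_add (a b c d : ℕ) : sng (a + c) (b + d) = sng a b + sng c d := by
  ext i; fin_cases i <;> simp

lemma deg_add (u v : Fin 2 →₀ ℕ) : deg (u + v) = deg u + deg v := by
  simp [deg]; ring

lemma degree_eq_deg (d : Fin 2 →₀ ℕ) : d.degree = deg d := by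
  rw [Finsupp.degree_apply, deg]
  rw [Finset.sum_subset (Finset.subset_univ d.support)]
  · rw [Fin.sum_univ_two]
  · intro x _ hx
    simpa using (Finsupp.notMem_support_iff.mp hx)

lemma single0_eq_sng (i : ℕ) : Finsupp.single (0 : Fin 2) i = sng i 0 := by
  simp [sng]

lemma single1_eq_sng (j : ℕ) : Finsupp.single (1 : Fin 2) j = sng 0 j := by
  simp [sng]

lemma fst_le_deg (d : Fin 2 →₀ ℕ) : d 0 ≤ deg d := Nat.le_add_right _ _
lemma snd_le_deg (d : Fin 2 →₀ ℕ) : d 1 ≤ deg d := Nat.le_add_left _ _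

/-- coefficient formula for `swapS` -/
lemma swapS_apply (g : Ser) (d : Fin 2 →₀ ℕ) :
    swapS g d = g (sng (d 1) (d 0)) := by
  classical
  rw [swapS, sub2]
  have hcoeff : ∀ i j : ℕ, MvPolynomial.coeff d ((MvPolynomial.X 1 : Pol) ^ i *
      (MvPolynomial.X 0) ^ j) = if (i, j) = (d 1, d 0) then 1 else 0 := by
    intro i j
    rw [MvPolynomial.X_pow_eq_monomial, MvPolynomial.X_pow_eq_monomial,
      MvPolynomial.monomial_mul, MvPolynomial.coeff_monomial, mul_one]
    have : Finsupp.single (1 : Fin 2) i + Finsupp.single 0 j = sng j i := by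
      rw [sng, add_comm]
    rw [this]
    by_cases h : (i, j) = (d 1, d 0)
    · rw [if_pos h]
      obtain ⟨h1, h2⟩ := Prod.mk.injEq .. ▸ h
      subst h1; subst h2
      rw [if_pos (eq_sng d).symm]
    · rw [if_neg h, if_neg]
      intro hc
      apply h
      rw [eq_sng d] at hc
      obtain ⟨h1, h2⟩ := sng_inj.mp hc
      simp [h1, h2]
  rw [Finset.sum_eq_single_of_mem (d 1, d 0)]
  · rw [hcoeff, if_pos rfl, mul_one, MvPowerSeries.coeff_apply]; rfl
  · simp only [Finset.mem_product, Finset.mem_range]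
    exact ⟨Nat.lt_succ_of_le (snd_le_deg d), Nat.lt_succ_of_le (fst_le_deg d)⟩
  · intro ij _ hij
    rw [hcoeff, if_neg (by simpa using hij), mul_zero]

/-- coefficient formula for `negS` -/
lemma negS_apply (g : Ser) (d : Fin 2 →₀ ℕ) :
    negS g d = (-1 : ℂ) ^ (deg d) * g d := by
  classical
  rw [negS, sub2]
  have hcoeff : ∀ i j : ℕ, MvPolynomial.coeff d ((-MvPolynomial.X 0 : Pol) ^ i *
      (-MvPolynomial.X 1) ^ j) = if (i, j) = (d 0, d 1) then (-1 : ℂ) ^ (i + j) else 0 := by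
    intro i j
    rw [neg_pow (MvPolynomial.X 0 : Pol) i, neg_pow (MvPolynomial.X 1 : Pol) j,
      MvPolynomial.X_pow_eq_monomial, MvPolynomial.X_pow_eq_monomial]
    have : ((-1 : Pol) ^ i * MvPolynomial.monomial (Finsupp.single 0 i) 1) *
        ((-1 : Pol) ^ j * MvPolynomial.monomial (Finsupp.single 1 j) 1)
        = ((-1 : Pol) ^ (i + j)) * MvPolynomial.monomial (sng i j) 1 := by
      rw [sng, pow_add, mul_mul_mul_comm, MvPolynomial.monomial_mul, mul_one]
    rw [this]
    have hm1 : ((-1 : Pol) ^ (i + j)) = MvPolynomial.C ((-1 : ℂ) ^ (i + j)) := by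
      rw [map_pow, map_neg, map_one]
    rw [hm1, MvPolynomial.coeff_C_mul, MvPolynomial.coeff_monomial]
    by_cases h : (i, j) = (d 0, d 1)
    · rw [if_pos h]
      obtain ⟨h1, h2⟩ := Prod.mk.injEq .. ▸ h
      subst h1; subst h2
      rw [if_pos (eq_sng d).symm, mul_one]
    · rw [if_neg h, if_neg, mul_zero]
      intro hc
      apply h
      rw [eq_sng d] at hc
      obtain ⟨h1, h2⟩ := sng_inj.mp hc
      simp [h1, h2]
  rw [Finset.sum_eq_single_of_mem (d 0, d 1)]
  · rw [hcoeff, if_pos rfl, MvPowerSeries.coeff_apply]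
    show g (sng (d 0) (d 1)) * (-1 : ℂ) ^ (d 0 + d 1) = (-1 : ℂ) ^ deg d * g d
    rw [← eq_sng d, deg]
    ring
  · simp only [Finset.mem_product, Finset.mem_range]
    exact ⟨Nat.lt_succ_of_le (fst_le_deg d), Nat.lt_succ_of_le (snd_le_deg d)⟩
  · intro ij _ hij
    rw [hcoeff, if_neg (by simpa using hij), mul_zero]


section Subst

variable (p q : Pol)

lemma sub2_add (g h : Ser) : sub2 p q (g + h) = sub2 p q g + sub2 p q h := by
  ext d
  rw [map_add, MvPowerSeries.coeff_apply, MvPowerSeries.coeff_apply, MvPowerSeries.coeff_apply,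
    sub2, sub2, sub2, ← Finset.sum_add_distrib]
  apply Finset.sum_congr rfl
  intro ij _
  rw [map_add, add_mul]

lemma sub2_smul (c : ℂ) (g : Ser) : sub2 p q (c • g) = c • sub2 p q g := by
  ext d
  rw [map_smul, smul_eq_mul, MvPowerSeries.coeff_apply, MvPowerSeries.coeff_apply,
    sub2, sub2, Finset.mul_sum]
  apply Finset.sum_congr rfl
  intro ij _
  rw [map_smul, smul_eq_mul, mul_assoc]

lemma sub2_neg (g : Ser) : sub2 p q (-g) = -sub2 p q g := by
  rw [← neg_one_smul ℂ g, sub2_smul, neg_one_smul]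

lemma sub2_sub (g h : Ser) : sub2 p q (g - h) = sub2 p q g - sub2 p q h := by
  rw [sub_eq_add_neg, sub2_add, sub2_neg, sub_eq_add_neg]

lemma isHomog_neg {φ : Pol} {n : ℕ} (h : φ.IsHomogeneous n) : (-φ).IsHomogeneous n := by
  intro d hd
  apply h
  simpa using hd

lemma homog_q : ((-MvPolynomial.X 0 - MvPolynomial.X 1 : Pol)).IsHomogeneous 1 := by
  have h : (-MvPolynomial.X 0 - MvPolynomial.X 1 : Pol) =
      -(MvPolynomial.X 0 + MvPolynomial.X 1) := by ring
  rw [h]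
  exact isHomog_neg ((MvPolynomial.isHomogeneous_X _ _).add (MvPolynomial.isHomogeneous_X _ _))

lemma homog_X (i : Fin 2) : ((MvPolynomial.X i : Pol)).IsHomogeneous 1 :=
  MvPolynomial.isHomogeneous_X _ _

lemma homog_negX (i : Fin 2) : ((-MvPolynomial.X i : Pol)).IsHomogeneous 1 :=
  isHomog_neg (homog_X i)

lemma pow_mul_homog (hp : p.IsHomogeneous 1) (hq : q.IsHomogeneous 1) (i j : ℕ) :
    (p ^ i * q ^ j).IsHomogeneous (i + j) := by
  have := (hp.pow i).mul (hq.pow j)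
  simpa using this

lemma coeff_pow_mul_eq_zero (hp : p.IsHomogeneous 1) (hq : q.IsHomogeneous 1) (i j : ℕ)
    (d : Fin 2 →₀ ℕ) (h : i + j ≠ deg d) : MvPolynomial.coeff d (p ^ i * q ^ j) = 0 :=
  (pow_mul_homog p q hp hq i j).coeff_eq_zero (by rw [degree_eq_deg]; omega)

/-- substitution data -/
def av : Fin 2 → Pol := fun t => if t = 0 then p else q

lemma prod_aux (v : Fin 2 →₀ ℕ) :
    (v.prod fun t k => (av p q t) ^ k) = p ^ (v 0) * q ^ (v 1) := by
  rw [Finsupp.prod_fintype]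
  · rw [Fin.prod_univ_two]
    simp [av]
  · intro i
    exact pow_zero _

/-- polynomial truncation of a power series -/
def Tr (N : ℕ) (g : Ser) : Pol :=
  ∑ ij ∈ Finset.range (N+1) ×ˢ Finset.range (N+1),
    MvPolynomial.monomial (sng ij.1 ij.2) (g (sng ij.1 ij.2))

lemma coeff_Tr (N : ℕ) (g : Ser) (e : Fin 2 →₀ ℕ) :
    MvPolynomial.coeff e (Tr N g) = if e 0 ≤ N ∧ e 1 ≤ N then g e else 0 := by
  classical
  rw [Tr, MvPolynomial.coeff_sum]
  by_cases h : e 0 ≤ N ∧ e 1 ≤ N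
  · rw [if_pos h, Finset.sum_eq_single_of_mem (e 0, e 1)]
    · rw [MvPolynomial.coeff_monomial, if_pos (eq_sng e).symm, ← eq_sng e]
    · simp [Nat.lt_succ_iff, h.1, h.2]
    · intro ij _ hij
      rw [MvPolynomial.coeff_monomial, if_neg]
      intro hc
      apply hij
      rw [eq_sng e] at hc
      obtain ⟨h1, h2⟩ := sng_inj.mp hc
      simp [Prod.ext_iff, h1, h2]
  · rw [if_neg h]
    apply Finset.sum_eq_zero
    intro ij hij
    rw [MvPolynomial.coeff_monomial, if_neg]
    intro hc
    apply h
    rw [eq_sng e] at hc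
    obtain ⟨h1, h2⟩ := sng_inj.mp hc
    simp only [Finset.mem_product, Finset.mem_range, Nat.lt_succ_iff] at hij
    omega

lemma sub2_eq (g : Ser) (d : Fin 2 →₀ ℕ) :
    sub2 p q g d = MvPolynomial.coeff d (MvPolynomial.aeval (av p q) (Tr (deg d) g)) := by
  rw [Tr, map_sum, MvPolynomial.coeff_sum, sub2]
  apply Finset.sum_congr rfl
  intro ij _
  rw [MvPolynomial.aeval_monomial, prod_aux, MvPolynomial.algebraMap_eq,
    MvPolynomial.coeff_C_mul]
  simp only [sng_apply0, sng_apply1]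
  rfl

lemma aeval_homog (hp : p.IsHomogeneous 1) (hq : q.IsHomogeneous 1) {r : Pol} {n : ℕ}
    (hr : r.IsHomogeneous n) : (MvPolynomial.aeval (av p q) r).IsHomogeneous n := by
  have hrw : MvPolynomial.aeval (av p q) r =
      ∑ v ∈ r.support, MvPolynomial.C (MvPolynomial.coeff v r) * (p ^ (v 0) * q ^ (v 1)) := by
    conv_lhs => rw [r.as_sum]
    rw [map_sum]
    apply Finset.sum_congr rfl
    intro v _
    rw [MvPolynomial.aeval_monomial, prod_aux, MvPolynomial.algebraMap_eq]
  rw [hrw]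
  apply MvPolynomial.IsHomogeneous.sum
  intro v hv
  have hdeg : v 0 + v 1 = n := by
    have hw := hr (MvPolynomial.mem_support_iff.mp hv)
    have hd : v.degree = n := by
      rw [Finsupp.degree_eq_weight_one]
      exact hw
    rw [degree_eq_deg, deg] at hd
    exact hd
  have hh := pow_mul_homog p q hp hq (v 0) (v 1)
  rw [hdeg] at hh
  exact hh.C_mul _

lemma coeff_aeval_hC (hp : p.IsHomogeneous 1) (hq : q.IsHomogeneous 1) (r : Pol)
    (d : Fin 2 →₀ ℕ) :
    MvPolynomial.coeff d (MvPolynomial.aeval (av p q) r)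
      = MvPolynomial.coeff d (MvPolynomial.aeval (av p q)
          (MvPolynomial.homogeneousComponent (deg d) r)) := by
  classical
  set B := max r.totalDegree (deg d) with hB
  have hsum : r = ∑ i ∈ Finset.range (B+1), MvPolynomial.homogeneousComponent i r := by
    conv_lhs => rw [← MvPolynomial.sum_homogeneousComponent r]
    apply Finset.sum_subset
    · intro x hx
      simp only [Finset.mem_range] at hx ⊢
      omega
    · intro x _ hx
      apply MvPolynomial.homogeneousComponent_eq_zero
      simp only [Finset.mem_range] at hx
      omega
  conv_lhs => rw [hsum]
  rw [map_sum, MvPolynomial.coeff_sum]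
  rw [Finset.sum_eq_single_of_mem (deg d)]
  · simp only [Finset.mem_range]
    omega
  · intro i _ hi
    apply MvPolynomial.IsHomogeneous.coeff_eq_zero
      (aeval_homog p q hp hq (MvPolynomial.homogeneousComponent_isHomogeneous i r))
    rw [degree_eq_deg]
    omega

lemma coeff_aeval_congr (hp : p.IsHomogeneous 1) (hq : q.IsHomogeneous 1) {r s : Pol}
    {d : Fin 2 →₀ ℕ}
    (h : ∀ e : Fin 2 →₀ ℕ, deg e = deg d → MvPolynomial.coeff e r = MvPolynomial.coeff e s) :
    MvPolynomial.coeff d (MvPolynomial.aeval (av p q) r)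
      = MvPolynomial.coeff d (MvPolynomial.aeval (av p q) s) := by
  rw [coeff_aeval_hC p q hp hq r d, coeff_aeval_hC p q hp hq s d]
  congr 1
  congr 1
  ext e
  rw [MvPolynomial.coeff_homogeneousComponent, MvPolynomial.coeff_homogeneousComponent]
  rw [degree_eq_deg]
  by_cases he : deg e = deg d
  · rw [if_pos he, if_pos he, h e he]
  · rw [if_neg he, if_neg he]

lemma sub2_mul (hp : p.IsHomogeneous 1) (hq : q.IsHomogeneous 1) (g h : Ser) :
    sub2 p q (g * h) = sub2 p q g * sub2 p q h := by
  classical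
  ext d
  rw [MvPowerSeries.coeff_mul, MvPowerSeries.coeff_apply, sub2_eq]
  have step : ∀ uv ∈ Finset.HasAntidiagonal.antidiagonal d,
      (MvPowerSeries.coeff uv.1) (sub2 p q g) * (MvPowerSeries.coeff uv.2) (sub2 p q h)
      = MvPolynomial.coeff uv.1 (MvPolynomial.aeval (av p q) (Tr (deg d) g)) *
        MvPolynomial.coeff uv.2 (MvPolynomial.aeval (av p q) (Tr (deg d) h)) := by
    intro uv huv
    rw [Finset.HasAntidiagonal.mem_antidiagonal] at huv
    have h1 : deg uv.1 ≤ deg d := by rw [← huv, deg_add]; omega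
    have h2 : deg uv.2 ≤ deg d := by rw [← huv, deg_add]; omega
    rw [MvPowerSeries.coeff_apply, MvPowerSeries.coeff_apply, sub2_eq, sub2_eq]
    refine congrArg₂ (· * ·) ?_ ?_
    · apply coeff_aeval_congr p q hp hq
      intro e he
      rw [coeff_Tr, coeff_Tr]
      have he0 := fst_le_deg e
      have he1 := snd_le_deg e
      rw [if_pos (by omega), if_pos (by omega)]
    · apply coeff_aeval_congr p q hp hq
      intro e he
      rw [coeff_Tr, coeff_Tr]
      have he0 := fst_le_deg e
      have he1 := snd_le_deg e
      rw [if_pos (by omega), if_pos (by omega)]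
  rw [Finset.sum_congr rfl step, ← MvPolynomial.coeff_mul, ← map_mul]
  apply coeff_aeval_congr p q hp hq
  intro e he
  have he0 := fst_le_deg e
  have he1 := snd_le_deg e
  rw [coeff_Tr, if_pos (by omega), MvPolynomial.coeff_mul]
  rw [show (g * h) e = MvPowerSeries.coeff e (g * h) from rfl, MvPowerSeries.coeff_mul]
  apply Finset.sum_congr rfl
  intro uv huv
  rw [Finset.HasAntidiagonal.mem_antidiagonal] at huv
  have h0 : uv.1 0 + uv.2 0 = e 0 := by
    have := congrArg (fun x : Fin 2 →₀ ℕ => x 0) huv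
    simpa using this
  have h1 : uv.1 1 + uv.2 1 = e 1 := by
    have := congrArg (fun x : Fin 2 →₀ ℕ => x 1) huv
    simpa using this
  have : deg e = e 0 + e 1 := rfl
  rw [coeff_Tr, coeff_Tr, if_pos (by omega), if_pos (by omega),
    MvPowerSeries.coeff_apply, MvPowerSeries.coeff_apply]

lemma sub2_one : sub2 p q 1 = 1 := by
  classical
  ext d
  rw [MvPowerSeries.coeff_apply, sub2, Finset.sum_eq_single_of_mem (0, 0)]
  · simp [MvPowerSeries.coeff_one, MvPolynomial.coeff_one, eq_comm]
  · simp
  · intro ij _ hij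
    convert zero_mul _
    rw [MvPowerSeries.coeff_one, if_neg]
    intro hc
    apply hij
    have : sng ij.1 ij.2 = sng 0 0 := by
      rw [show sng 0 0 = 0 by simp [sng]]
      exact hc
    obtain ⟨h1, h2⟩ := sng_inj.mp this
    simp [Prod.ext_iff, h1, h2]

lemma sub2_X0 (hp : p.IsHomogeneous 1) :
    sub2 p q (X 0 : Ser) = fun d => MvPolynomial.coeff d p := by
  classical
  funext d
  rw [sub2]
  have hterm : ∀ i j : ℕ, (MvPowerSeries.coeff (Finsupp.single 0 i + Finsupp.single 1 j))
      (X 0 : Ser) = if (i, j) = (1, 0) then 1 else 0 := by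
    intro i j
    rw [MvPowerSeries.coeff_X]
    by_cases h : (i, j) = (1, 0)
    · obtain ⟨h1, h2⟩ := Prod.mk.injEq .. ▸ h
      subst h1; subst h2
      rw [if_pos h, if_pos]
      rw [single1_eq_sng, single0_eq_sng]
      show sng 1 0 + sng 0 0 = sng 1 0
      rw [show sng 0 0 = 0 by simp [sng], add_zero]
    · rw [if_neg h, if_neg]
      intro hc
      apply h
      have hc' : sng i j = sng 1 0 := by rw [sng, hc, single0_eq_sng]
      obtain ⟨h1, h2⟩ := sng_inj.mp hc'
      simp [Prod.ext_iff, h1, h2]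
  by_cases hd : 1 ≤ deg d
  · rw [Finset.sum_eq_single_of_mem (1, 0)]
    · rw [hterm, if_pos rfl, one_mul, pow_one, pow_zero, mul_one]
    · simp only [Finset.mem_product, Finset.mem_range]
      omega
    · intro ij _ hij
      rw [hterm, if_neg (by simpa using hij), zero_mul]
  · have hd0 : deg d = 0 := by omega
    rw [Finset.sum_eq_zero]
    · symm
      apply hp.coeff_eq_zero
      rw [degree_eq_deg]
      omega
    · intro ij hij
      simp only [Finset.mem_product, Finset.mem_range, hd0] at hij
      have : ij = (0, 0) := by
        obtain ⟨a, b⟩ := hij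
        have ha : ij.1 = 0 := by omega
        have hb : ij.2 = 0 := by omega
        simp [Prod.ext_iff, ha, hb]
      subst this
      rw [hterm, if_neg (by decide), zero_mul]

lemma sub2_X1 (hq : q.IsHomogeneous 1) :
    sub2 p q (X 1 : Ser) = fun d => MvPolynomial.coeff d q := by
  classical
  funext d
  rw [sub2]
  have hterm : ∀ i j : ℕ, (MvPowerSeries.coeff (Finsupp.single 0 i + Finsupp.single 1 j))
      (X 1 : Ser) = if (i, j) = (0, 1) then 1 else 0 := by
    intro i j
    rw [MvPowerSeries.coeff_X]
    by_cases h : (i, j) = (0, 1)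
    · obtain ⟨h1, h2⟩ := Prod.mk.injEq .. ▸ h
      subst h1; subst h2
      rw [if_pos h, if_pos]
      rw [single1_eq_sng, single0_eq_sng]
      show sng 0 0 + sng 0 1 = sng 0 1
      rw [show sng 0 0 = 0 by simp [sng], zero_add]
    · rw [if_neg h, if_neg]
      intro hc
      apply h
      have hc' : sng i j = sng 0 1 := by rw [sng, hc, single1_eq_sng]
      obtain ⟨h1, h2⟩ := sng_inj.mp hc'
      simp [Prod.ext_iff, h1, h2]
  by_cases hd : 1 ≤ deg d
  · rw [Finset.sum_eq_single_of_mem (0, 1)]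
    · rw [hterm, if_pos rfl, one_mul, pow_one, pow_zero, one_mul]
    · simp only [Finset.mem_product, Finset.mem_range]
      omega
    · intro ij _ hij
      rw [hterm, if_neg (by simpa using hij), zero_mul]
  · have hd0 : deg d = 0 := by omega
    rw [Finset.sum_eq_zero]
    · symm
      apply hq.coeff_eq_zero
      rw [degree_eq_deg]
      omega
    · intro ij hij
      simp only [Finset.mem_product, Finset.mem_range, hd0] at hij
      have : ij = (0, 0) := by
        obtain ⟨a, b⟩ := hij
        have ha : ij.1 = 0 := by omega
        have hb : ij.2 = 0 := by omega
        simp [Prod.ext_iff, ha, hb]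
      subst this
      rw [hterm, if_neg (by decide), zero_mul]

end Subst


section Inst

lemma polyX_toSer (i : Fin 2) :
    (fun d => MvPolynomial.coeff d (MvPolynomial.X i : Pol)) = (X i : Ser) := by
  funext d
  rw [show (X i : Ser) d = MvPowerSeries.coeff d (X i) from rfl, MvPowerSeries.coeff_X,
    MvPolynomial.coeff_X']
  simp [eq_comm]

lemma polynegX_toSer (i : Fin 2) :
    (fun d => MvPolynomial.coeff d (-MvPolynomial.X i : Pol)) = (-(X i) : Ser) := by
  funext d
  rw [show ((-(X i) : Ser)) d = MvPowerSeries.coeff d (-(X i)) from rfl, map_neg,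
    MvPowerSeries.coeff_X, MvPolynomial.coeff_neg, MvPolynomial.coeff_X']
  simp [eq_comm]

lemma polyq_toSer :
    (fun d => MvPolynomial.coeff d (-MvPolynomial.X 0 - MvPolynomial.X 1 : Pol))
      = (-(X 0) - X 1 : Ser) := by
  funext d
  rw [show ((-(X 0) - X 1 : Ser)) d = MvPowerSeries.coeff d (-(X 0) - X 1) from rfl,
    map_sub, map_neg, MvPowerSeries.coeff_X, MvPowerSeries.coeff_X,
    MvPolynomial.coeff_sub, MvPolynomial.coeff_neg, MvPolynomial.coeff_X',
    MvPolynomial.coeff_X']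
  simp [eq_comm]

lemma s₁_mul (g h : Ser) : s₁ (g * h) = s₁ g * s₁ h := sub2_mul _ _ (homog_X 1) homog_q g h
lemma s₂_mul (g h : Ser) : s₂ (g * h) = s₂ g * s₂ h := sub2_mul _ _ (homog_X 0) homog_q g h
lemma swapS_mul (g h : Ser) : swapS (g * h) = swapS g * swapS h :=
  sub2_mul _ _ (homog_X 1) (homog_X 0) g h
lemma negS_mul (g h : Ser) : negS (g * h) = negS g * negS h :=
  sub2_mul _ _ (homog_negX 0) (homog_negX 1) g h

lemma s₁_add (g h : Ser) : s₁ (g + h) = s₁ g + s₁ h := sub2_add _ _ g h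
lemma s₂_add (g h : Ser) : s₂ (g + h) = s₂ g + s₂ h := sub2_add _ _ g h
lemma swapS_add (g h : Ser) : swapS (g + h) = swapS g + swapS h := sub2_add _ _ g h
lemma negS_add (g h : Ser) : negS (g + h) = negS g + negS h := sub2_add _ _ g h
lemma s₁_smul (c : ℂ) (g : Ser) : s₁ (c • g) = c • s₁ g := sub2_smul _ _ c g
lemma s₂_smul (c : ℂ) (g : Ser) : s₂ (c • g) = c • s₂ g := sub2_smul _ _ c g
lemma swapS_smul (c : ℂ) (g : Ser) : swapS (c • g) = c • swapS g := sub2_smul _ _ c g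
lemma negS_smul (c : ℂ) (g : Ser) : negS (c • g) = c • negS g := sub2_smul _ _ c g
lemma negS_sub (g h : Ser) : negS (g - h) = negS g - negS h := sub2_sub _ _ g h

lemma swapS_one : swapS (1 : Ser) = 1 := sub2_one _ _
lemma negS_one : negS (1 : Ser) = 1 := sub2_one _ _

lemma s₁_X0 : s₁ (X 0 : Ser) = X 1 := by
  rw [s₁, sub2_X0 _ _ (homog_X 1)]; exact polyX_toSer 1
lemma s₁_X1 : s₁ (X 1 : Ser) = -(X 0) - X 1 := by
  rw [s₁, sub2_X1 _ _ homog_q]; exact polyq_toSer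
lemma s₂_X0 : s₂ (X 0 : Ser) = X 0 := by
  rw [s₂, sub2_X0 _ _ (homog_X 0)]; exact polyX_toSer 0
lemma s₂_X1 : s₂ (X 1 : Ser) = -(X 0) - X 1 := by
  rw [s₂, sub2_X1 _ _ homog_q]; exact polyq_toSer
lemma swapS_X0 : swapS (X 0 : Ser) = X 1 := by
  rw [swapS, sub2_X0 _ _ (homog_X 1)]; exact polyX_toSer 1
lemma swapS_X1 : swapS (X 1 : Ser) = X 0 := by
  rw [swapS, sub2_X1 _ _ (homog_X 0)]; exact polyX_toSer 0
lemma negS_X0 : negS (X 0 : Ser) = -(X 0) := by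
  rw [negS, sub2_X0 _ _ (homog_negX 0)]; exact polynegX_toSer 0
lemma negS_X1 : negS (X 1 : Ser) = -(X 1) := by
  rw [negS, sub2_X1 _ _ (homog_negX 1)]; exact polynegX_toSer 1

lemma negS_negS (g : Ser) : negS (negS g) = g := by
  funext d
  rw [negS_apply, negS_apply, ← mul_assoc, ← pow_add, ← two_mul, pow_mul]
  norm_num

end Inst

section Exp

lemma coeff_pow_smulX (c : ℂ) (i : Fin 2) (k : ℕ) (d : Fin 2 →₀ ℕ) :
    MvPowerSeries.coeff d ((c • (X i : Ser)) ^ k)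
      = c ^ k * (if d = Finsupp.single i k then 1 else 0) := by
  classical
  rw [smul_pow, map_smul, smul_eq_mul, MvPowerSeries.coeff_X_pow]

lemma expMv_smulX (c : ℂ) (i : Fin 2) (d : Fin 2 →₀ ℕ) :
    expMv (c • X i) d
      = if d = Finsupp.single i (d i) then c ^ (d i) / ((d i).factorial : ℂ) else 0 := by
  classical
  rw [expMv]
  by_cases h : d = Finsupp.single i (d i)
  · rw [if_pos h, Finset.sum_eq_single_of_mem (d i)]
    · rw [coeff_pow_smulX, if_pos h, mul_one]
    · simp only [Finset.mem_range, Nat.lt_succ_iff]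
      fin_cases i
      · exact fst_le_deg d
      · exact snd_le_deg d
    · intro k _ hk
      rw [coeff_pow_smulX, if_neg, mul_zero, zero_div]
      intro hc
      apply hk
      have h2 : Finsupp.single i (d i) = Finsupp.single i k := by rw [← h, hc]
      have := congrArg (fun x : Fin 2 →₀ ℕ => x i) h2
      simpa [Finsupp.single_eq_same] using this.symm
  · rw [if_neg h]
    apply Finset.sum_eq_zero
    intro k _
    rw [coeff_pow_smulX, if_neg, mul_zero, zero_div]
    intro hc
    apply h
    have hik : d i = k := by rw [hc]; exact Finsupp.single_eq_same
    rw [hik]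
    exact hc

lemma expMv_X1_apply (d : Fin 2 →₀ ℕ) :
    expMv (X 1 : Ser) d = if d 0 = 0 then 1 / ((d 1).factorial : ℂ) else 0 := by
  have hcond : (d = Finsupp.single 1 (d 1)) ↔ d 0 = 0 := by
    constructor
    · intro h
      conv_lhs => rw [h]
      exact Finsupp.single_eq_of_ne (by decide)
    · intro h
      ext i
      fin_cases i <;> simp [h, Finsupp.single_apply]
  rw [show (X 1 : Ser) = (1 : ℂ) • X 1 from (one_smul ℂ _).symm, expMv_smulX]
  by_cases h : d 0 = 0
  · rw [if_pos (hcond.mpr h), if_pos h, one_pow]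
  · rw [if_neg (fun hc => h (hcond.mp hc)), if_neg h]

lemma expMv_X0_apply (d : Fin 2 →₀ ℕ) :
    expMv (X 0 : Ser) d = if d 1 = 0 then 1 / ((d 0).factorial : ℂ) else 0 := by
  have hcond : (d = Finsupp.single 0 (d 0)) ↔ d 1 = 0 := by
    constructor
    · intro h
      conv_lhs => rw [h]
      exact Finsupp.single_eq_of_ne (by decide)
    · intro h
      ext i
      fin_cases i <;> simp [h, Finsupp.single_apply]
  rw [show (X 0 : Ser) = (1 : ℂ) • X 0 from (one_smul ℂ _).symm, expMv_smulX]
  by_cases h : d 1 = 0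
  · rw [if_pos (hcond.mpr h), if_pos h, one_pow]
  · rw [if_neg (fun hc => h (hcond.mp hc)), if_neg h]

lemma expMv_negX0_apply (d : Fin 2 →₀ ℕ) :
    expMv (-(X 0) : Ser) d
      = if d 1 = 0 then (-1 : ℂ) ^ (d 0) / ((d 0).factorial : ℂ) else 0 := by
  have hcond : (d = Finsupp.single 0 (d 0)) ↔ d 1 = 0 := by
    constructor
    · intro h
      conv_lhs => rw [h]
      exact Finsupp.single_eq_of_ne (by decide)
    · intro h
      ext i
      fin_cases i <;> simp [h, Finsupp.single_apply]
  rw [show (-(X 0) : Ser) = (-1 : ℂ) • X 0 from (neg_one_smul ℂ _).symm, expMv_smulX]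
  by_cases h : d 1 = 0
  · rw [if_pos (hcond.mpr h), if_pos h]
  · rw [if_neg (fun hc => h (hcond.mp hc)), if_neg h]

lemma expMv_negX1_apply (d : Fin 2 →₀ ℕ) :
    expMv (-(X 1) : Ser) d
      = if d 0 = 0 then (-1 : ℂ) ^ (d 1) / ((d 1).factorial : ℂ) else 0 := by
  have hcond : (d = Finsupp.single 1 (d 1)) ↔ d 0 = 0 := by
    constructor
    · intro h
      conv_lhs => rw [h]
      exact Finsupp.single_eq_of_ne (by decide)
    · intro h
      ext i
      fin_cases i <;> simp [h, Finsupp.single_apply]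
  rw [show (-(X 1) : Ser) = (-1 : ℂ) • X 1 from (neg_one_smul ℂ _).symm, expMv_smulX]
  by_cases h : d 0 = 0
  · rw [if_pos (hcond.mpr h), if_pos h]
  · rw [if_neg (fun hc => h (hcond.mp hc)), if_neg h]

lemma swapS_expX1 : swapS (expMv (X 1) : Ser) = expMv (X 0) := by
  funext d
  rw [swapS_apply, expMv_X1_apply, expMv_X0_apply, sng_apply0, sng_apply1]

lemma swapS_expNegX0 : swapS (expMv (-(X 0)) : Ser) = expMv (-(X 1)) := by
  funext d
  rw [swapS_apply, expMv_negX0_apply, expMv_negX1_apply, sng_apply0, sng_apply1]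

lemma negS_expX0 : negS (expMv (X 0) : Ser) = expMv (-(X 0)) := by
  funext d
  rw [negS_apply, expMv_X0_apply, expMv_negX0_apply]
  by_cases h : d 1 = 0
  · rw [if_pos h, if_pos h]
    have hd : deg d = d 0 := by simp [deg, h]
    rw [hd]
    ring
  · rw [if_neg h, if_neg h, mul_zero]

lemma negS_expNegX1 : negS (expMv (-(X 1)) : Ser) = expMv (X 1) := by
  funext d
  rw [negS_apply, expMv_negX1_apply, expMv_X1_apply]
  by_cases h : d 0 = 0
  · rw [if_pos h, if_pos h]
    have hd : deg d = d 1 := by simp [deg, h]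
    rw [hd, div_eq_mul_inv, div_eq_mul_inv, ← mul_assoc, ← pow_add, ← two_mul, pow_mul]
    norm_num
  · rw [if_neg h, if_neg h, mul_zero]

end Exp

section Comp

lemma mapDomain_swap (d : Fin 2 →₀ ℕ) :
    Finsupp.mapDomain (Equiv.swap (0 : Fin 2) 1) d = sng (d 1) (d 0) := by
  ext i
  rw [Finsupp.mapDomain_equiv_apply]
  fin_cases i
  · simp [Equiv.swap_apply_left]
  · simp [Equiv.swap_apply_right]

lemma coeff_swap_poly (r : Pol) (d : Fin 2 →₀ ℕ) :
    MvPolynomial.coeff (sng (d 1) (d 0)) (MvPolynomial.rename (Equiv.swap (0 : Fin 2) 1) r)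
      = MvPolynomial.coeff d r := by
  rw [← mapDomain_swap d]
  exact MvPolynomial.coeff_rename_mapDomain _ (Equiv.injective _) r d

lemma rename_swap_q :
    MvPolynomial.rename (Equiv.swap (0 : Fin 2) 1)
        ((-MvPolynomial.X 0 - MvPolynomial.X 1 : Pol))
      = -MvPolynomial.X 0 - MvPolynomial.X 1 := by
  rw [map_sub, map_neg, MvPolynomial.rename_X, MvPolynomial.rename_X,
    Equiv.swap_apply_left, Equiv.swap_apply_right]
  ring

lemma swapS_s₁ (g : Ser) : swapS (s₁ g) = s₂ g := by
  funext d
  rw [swapS_apply]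
  simp only [s₁, s₂, sub2]
  rw [deg_sng, show d 1 + d 0 = deg d from Nat.add_comm _ _]
  apply Finset.sum_congr rfl
  intro ij _
  congr 1
  rw [← coeff_swap_poly ((MvPolynomial.X 0 : Pol) ^ ij.1 *
    (-MvPolynomial.X 0 - MvPolynomial.X 1) ^ ij.2) d]
  congr 1
  rw [map_mul, map_pow, map_pow, MvPolynomial.rename_X, rename_swap_q, Equiv.swap_apply_left]

lemma swapS_s₂ (g : Ser) : swapS (s₂ g) = s₁ g := by
  funext d
  rw [swapS_apply]
  simp only [s₁, s₂, sub2]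
  rw [deg_sng, show d 1 + d 0 = deg d from Nat.add_comm _ _]
  apply Finset.sum_congr rfl
  intro ij _
  congr 1
  rw [← coeff_swap_poly ((MvPolynomial.X 1 : Pol) ^ ij.1 *
    (-MvPolynomial.X 0 - MvPolynomial.X 1) ^ ij.2) d]
  congr 1
  rw [map_mul, map_pow, map_pow, MvPolynomial.rename_X, rename_swap_q, Equiv.swap_apply_right]

lemma negS_s₁ (g : Ser) : negS (s₁ g) = s₁ (negS g) := by
  funext d
  rw [negS_apply]
  simp only [s₁, sub2]
  rw [Finset.mul_sum]
  apply Finset.sum_congr rfl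
  intro ij _
  rw [MvPowerSeries.coeff_apply, MvPowerSeries.coeff_apply, negS_apply g,
    show deg (Finsupp.single (0 : Fin 2) ij.1 + Finsupp.single 1 ij.2) = ij.1 + ij.2
      from deg_sng ij.1 ij.2]
  by_cases hc : MvPolynomial.coeff d ((MvPolynomial.X 1 : Pol) ^ ij.1 *
      (-MvPolynomial.X 0 - MvPolynomial.X 1) ^ ij.2) = 0
  · rw [hc]; ring
  · have hij : ij.1 + ij.2 = deg d := by
      by_contra hne
      exact hc (coeff_pow_mul_eq_zero _ _ (homog_X 1) homog_q ij.1 ij.2 d hne)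
    rw [hij]
    ring

lemma negS_s₂ (g : Ser) : negS (s₂ g) = s₂ (negS g) := by
  funext d
  rw [negS_apply]
  simp only [s₂, sub2]
  rw [Finset.mul_sum]
  apply Finset.sum_congr rfl
  intro ij _
  rw [MvPowerSeries.coeff_apply, MvPowerSeries.coeff_apply, negS_apply g,
    show deg (Finsupp.single (0 : Fin 2) ij.1 + Finsupp.single 1 ij.2) = ij.1 + ij.2
      from deg_sng ij.1 ij.2]
  by_cases hc : MvPolynomial.coeff d ((MvPolynomial.X 0 : Pol) ^ ij.1 *
      (-MvPolynomial.X 0 - MvPolynomial.X 1) ^ ij.2) = 0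
  · rw [hc]; ring
  · have hij : ij.1 + ij.2 = deg d := by
      by_contra hne
      exact hc (coeff_pow_mul_eq_zero _ _ (homog_X 0) homog_q ij.1 ij.2 d hne)
    rw [hij]
    ring

end Comp


section Main

lemma sub2_zero (p q : Pol) : sub2 p q (0 : Ser) = 0 := by
  funext d
  rw [sub2]
  apply Finset.sum_eq_zero
  intro ij _
  rw [map_zero, zero_mul]

lemma swapS_zero : swapS (0 : Ser) = 0 := sub2_zero _ _
lemma negS_zero : negS (0 : Ser) = 0 := sub2_zero _ _
lemma s₁_sub (g h : Ser) : s₁ (g - h) = s₁ g - s₁ h := sub2_sub _ _ g h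
lemma s₂_sub (g h : Ser) : s₂ (g - h) = s₂ g - s₂ h := sub2_sub _ _ g h
lemma swapS_sub (g h : Ser) : swapS (g - h) = swapS g - swapS h := sub2_sub _ _ g h

/-- the hexagon operator -/
def Lop (g : Ser) : Ser :=
  (X 0 + X 1) * g - (X 0 * expMv (X 1) * s₁ g + X 1 * expMv (-X 0) * s₂ g)

lemma Lop_zero_iff (g : Ser) : Lop g = 0 ↔
    ((X 0 + X 1) * g = X 0 * expMv (X 1) * s₁ g + X 1 * expMv (-X 0) * s₂ g) := by
  rw [Lop, sub_eq_zero]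

lemma Lop_add (g h : Ser) : Lop (g + h) = Lop g + Lop h := by
  rw [Lop, Lop, Lop, s₁_add, s₂_add]
  ring

lemma Lop_sub (g h : Ser) : Lop (g - h) = Lop g - Lop h := by
  rw [Lop, Lop, Lop, s₁_sub, s₂_sub]
  ring

lemma Lop_neg_of_symm (g : Ser) (hs : swapS g = g) (h0 : Lop g = 0) :
    Lop (negS g) = 0 := by
  have key : negS (swapS (Lop g)) = -(Lop (negS g)) := by
    simp only [Lop, swapS_sub, swapS_add, swapS_mul, swapS_X0, swapS_X1, swapS_expX1,
      swapS_expNegX0, swapS_s₁, swapS_s₂, hs, negS_sub, negS_add, negS_mul, negS_X0, negS_X1,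
      negS_expX0, negS_expNegX1, negS_s₁, negS_s₂]
    ring
  rw [h0, swapS_zero, negS_zero] at key
  exact neg_eq_zero.mp key.symm

lemma Lop_oddmul (h : Ser) :
    Lop (X 0 * X 1 * h)
      = X 0 * X 1 * (X 0 + X 1) * (h + expMv (X 1) * s₁ h + expMv (-X 0) * s₂ h) := by
  rw [Lop]
  simp only [s₁_mul, s₂_mul, s₁_X0, s₁_X1, s₂_X0, s₂_X1]
  ring

lemma half_add_half_sub (x y : Ser) :
    (1/2 : ℂ) • (x + y) + (1/2 : ℂ) • (x - y) = x := by
  rw [← smul_add, show (x + y) + (x - y) = x + x by ring, ← two_smul ℂ x, smul_smul]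
  norm_num

lemma X_ne (i : Fin 2) : (X i : Ser) ≠ 0 := by
  intro h
  have h2 := congrArg (fun s : Ser => MvPowerSeries.coeff (Finsupp.single i 1) s) h
  simp [MvPowerSeries.coeff_X] at h2

lemma X_add_X_ne : ((X 0 + X 1) : Ser) ≠ 0 := by
  intro h
  have h2 := congrArg (fun s : Ser => MvPowerSeries.coeff (Finsupp.single 0 1) s) h
  have hne : (Finsupp.single (0 : Fin 2) 1) ≠ Finsupp.single 1 1 := by
    intro hc
    have := congrArg (fun x : Fin 2 →₀ ℕ => x 0) hc
    simp [Finsupp.single_apply] at this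
  simp [MvPowerSeries.coeff_X, hne] at h2

lemma XXX_ne : ((X 0 * X 1 * (X 0 + X 1)) : Ser) ≠ 0 :=
  mul_ne_zero (mul_ne_zero (X_ne 0) (X_ne 1)) X_add_X_ne

end Main

end Aux

open Aux

/-- for symmetric `f`, `f̃ = 1 + λμ·f`, `F = Even(f̃)`, `O = Odd(f)`:
the equation `(λ+μ)·f̃ = λe^{μ}·f̃(μ,−λ−μ) + μe^{−λ}·f̃(λ,−λ−μ)` holds iff both
`(λ+μ)·F = λe^{μ}·F(μ,−λ−μ) + μe^{−λ}·F(λ,−λ−μ)` and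
`O + e^{μ}·O(μ,−λ−μ) + e^{−λ}·O(λ,−λ−μ) = 0` hold. -/
theorem eq44_iff_even_odd (f ft F O : MvPowerSeries (Fin 2) ℂ)
    (hf : swapS f = f) (hft : ft = 1 + X 0 * X 1 * f)
    (hF : F = evenPart ft) (hO : O = oddPart f) :
    (((X 0 : MvPowerSeries (Fin 2) ℂ) + X 1) * ft
        = X 0 * expMv (X 1) * s₁ ft + X 1 * expMv (-X 0) * s₂ ft)
      ↔ ((((X 0 : MvPowerSeries (Fin 2) ℂ) + X 1) * F
            = X 0 * expMv (X 1) * s₁ F + X 1 * expMv (-X 0) * s₂ F) ∧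
          (O + expMv (X 1) * s₁ O + expMv (-X 0) * s₂ O = 0)) := by
  have hnft : negS ft = 1 + X 0 * X 1 * negS f := by
    rw [hft, negS_add, negS_one, negS_mul, negS_mul, negS_X0, negS_X1]; ring
  have hsub : ft - negS ft = X 0 * X 1 * f - X 0 * X 1 * negS f := by rw [hnft, hft]; ring
  have hsplit : ft = F + X 0 * X 1 * O := by
    have hmid : F + X 0 * X 1 * O
        = (1/2 : ℂ) • (ft + negS ft) + (1/2 : ℂ) • (ft - negS ft) := by
      rw [hF, hO, evenPart, oddPart, mul_smul_comm, mul_sub, ← hsub]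
    rw [hmid, half_add_half_sub]
  have hsymm : swapS ft = ft := by
    rw [hft, swapS_add, swapS_one, swapS_mul, swapS_mul, swapS_X0, swapS_X1, hf]; ring
  have hFneg : negS F = F := by
    rw [hF, evenPart, negS_smul, negS_add, negS_negS, add_comm (negS ft) ft]
  have hOneg : negS O = -O := by
    rw [hO, oddPart, negS_smul, negS_sub, negS_negS, ← smul_neg, neg_sub]
  have hnegsplit : negS ft = F - X 0 * X 1 * O := by
    rw [hsplit, negS_add, negS_mul, negS_mul, negS_X0, negS_X1, hFneg, hOneg]; ring
  have hLsum : Lop ft = Lop F + Lop (X 0 * X 1 * O) := by rw [hsplit, Lop_add]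
  rw [← Lop_zero_iff, ← Lop_zero_iff]
  constructor
  · intro h0
    have h0' : Lop (negS ft) = 0 := Lop_neg_of_symm ft hsymm h0
    rw [hnegsplit, Lop_sub] at h0'
    rw [hLsum] at h0
    have hA : Lop F = 0 := by
      have h3 : (2 : ℂ) • Lop F = 0 := by rw [two_smul]; linear_combination h0 + h0'
      have h4 := congrArg (fun x : MvPowerSeries (Fin 2) ℂ => (1/2 : ℂ) • x) h3
      simp only [smul_smul, smul_zero] at h4
      norm_num at h4
      exact h4
    have hB : Lop (X 0 * X 1 * O) = 0 := by linear_combination h0 - hA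
    refine ⟨hA, ?_⟩
    have hprod : (X 0 * X 1 * (X 0 + X 1) : MvPowerSeries (Fin 2) ℂ) *
        (O + expMv (X 1) * s₁ O + expMv (-X 0) * s₂ O) = 0 := by
      rw [← Lop_oddmul]; exact hB
    rcases mul_eq_zero.mp hprod with hz | hz
    · exact absurd hz XXX_ne
    · exact hz
  · rintro ⟨hA, hBeq⟩
    rw [hLsum, hA, zero_add, Lop_oddmul, hBeq, mul_zero]

end
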